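/- Let U ⊆ ℝ be an open set and y : ℝ → ℝ a twice differentiable function on U with y(x) ≠ 0 for all x ∈ U, satisfying the second-order ODE y''(x) = -y(x)^3·y'(x)^4 - y'(x)^2/y(x) - y(x)/2 on U. Then the function ȳ := y²/2 satisfies the Rayleigh equation ȳ''(x) + ȳ'(x)^4 + ȳ(x) = 0 on U. -/

import Mathlib

/-- If `y` is twice differentiable on an open set `U`, nonvanishing there,
and satisfies `y'' = -y^3 (y')^4 - (y')^2 / y - y/2` on `U`, then `ȳ := y^2/2`
satisfies the Rayleigh equation `ȳ'' + (ȳ')^4 + ȳ = 0` on `U`. -/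
theorem statement0 (U : Set ℝ) (hU : IsOpen U) (y : ℝ → ℝ)
    (hy1 : ∀ x ∈ U, DifferentiableAt ℝ y x)
    (hy2 : ∀ x ∈ U, DifferentiableAt ℝ (deriv y) x)
    (hy0 : ∀ x ∈ U, y x ≠ 0)
    (hode : ∀ x ∈ U, deriv (deriv y) x =
      -(y x)^3 * (deriv y x)^4 - (deriv y x)^2 / y x - y x / 2) :
    ∀ x ∈ U,
      deriv (deriv (fun t => (y t)^2 / 2)) x
        + (deriv (fun t => (y t)^2 / 2) x)^4 + (y x)^2 / 2 = 0 := by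
  intro x hx
  have hd1 : ∀ z ∈ U, deriv (fun t => (y t)^2 / 2) z = y z * deriv y z := by
    intro z hz
    have h := hy1 z hz
    have : deriv (fun t => (y t)^2 / 2) z = deriv (fun t => (y t)^2) z / 2 := by
      simp [deriv_div_const]
    rw [this, deriv_fun_pow h]
    ring
  have heq : deriv (fun t => (y t)^2 / 2) =ᶠ[nhds x] fun z => y z * deriv y z :=
    Filter.eventuallyEq_of_mem (hU.mem_nhds hx) hd1
  have h2 : deriv (deriv (fun t => (y t)^2 / 2)) x
      = deriv y x * deriv y x + y x * deriv (deriv y) x := by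
    rw [heq.deriv_eq, deriv_fun_mul (hy1 x hx) (hy2 x hx)]
  rw [h2, hd1 x hx, hode x hx]
  have hne := hy0 x hx
  field_simp
  ring
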